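/- Let F be a field and ν ≥ 1. Work in the multivariate polynomial ring over F with variables X(s,k) indexed by (s,k) ∈ Fin ν × Fin 4, and let Q = ∏_{s : Fin ν} ( X(s,0)·X(s,2) + X(s,1)·X(s,3) ). Define the matrix M, with rows and columns indexed by functions u, v : Fin ν → Fin 2, by setting M(u,v) equal to the coefficient in Q of the multilinear monomial (∏_{s} X(s, u(s))) · (∏_{s} X(s, 2 + v(s))) (for each s, the row side chooses X(s,0) or X(s,1) according to u(s), and the column side chooses X(s,2) or X(s,3) according to v(s)). Then M(u,v) = 1 if u = v and M(u,v) = 0 otherwise; in particular M is the 2^ν × 2^ν identity matrix and rank(M) = 2^ν. [This is the Nisan-style full-rank claim at the heart of the lower bound of Theorem 3.4: the (S,T) block of the coefficient matrix of the block-diagonal permanent is nonzero precisely when S ∩ T = ∅, so the rank is at least 2^ν.] -/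

import Mathlib

open MvPolynomial


section
variable {ν : ℕ}

private noncomputable def dd (u v : Fin ν → Fin 2) : (Fin ν × Fin 4) →₀ ℕ :=
  ∑ s : Fin ν,
    (Finsupp.single (s, ((u s).castLE (by norm_num) : Fin 4)) 1 +
     Finsupp.single (s, (⟨(v s).val + 2, Nat.add_lt_add_right (v s).isLt 2⟩ : Fin 4)) 1)

private lemma dd_apply (u v : Fin ν → Fin 2) (s : Fin ν) (a : Fin 4) :
    dd u v (s, a) =
      (if a = (u s).castLE (by norm_num) then 1 else 0) +
      (if a = (⟨(v s).val + 2, Nat.add_lt_add_right (v s).isLt 2⟩ : Fin 4) then 1 else 0) := by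
  classical
  rw [dd, Finsupp.finset_sum_apply, Finset.sum_eq_single s]
  · simp [Finsupp.single_apply, Prod.ext_iff, eq_comm]
  · intro t _ ht
    simp [Finsupp.single_apply, Prod.ext_iff, ht, Ne.symm ht]
  · simp

private lemma dd_inj (u v u' v' : Fin ν → Fin 2) (h : dd u v = dd u' v') :
    u = u' ∧ v = v' := by
  constructor
  · funext s
    have h1 := congrArg (fun f => f (s, (u s).castLE (by norm_num))) h
    simp only [dd_apply] at h1
    have hne : ((u s).castLE (by norm_num) : Fin 4) ≠ ⟨(v s).val + 2, Nat.add_lt_add_right (v s).isLt 2⟩ := by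
      intro hh; have := congrArg Fin.val hh
      simp at this; omega
    have hne' : ((u s).castLE (by norm_num) : Fin 4) ≠ ⟨(v' s).val + 2, Nat.add_lt_add_right (v' s).isLt 2⟩ := by
      intro hh; have := congrArg Fin.val hh
      simp at this; omega
    simp [hne, hne'] at h1
    by_contra h2
    exact h2 h1
  · funext s
    have h1 := congrArg (fun f => f (s, (⟨(v s).val + 2, Nat.add_lt_add_right (v s).isLt 2⟩ : Fin 4))) h
    simp only [dd_apply] at h1
    have hne : (⟨(v s).val + 2, Nat.add_lt_add_right (v s).isLt 2⟩ : Fin 4) ≠ (u s).castLE (by norm_num) := by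
      intro hh; have := congrArg Fin.val hh
      simp at this; omega
    have hne' : (⟨(v s).val + 2, Nat.add_lt_add_right (v s).isLt 2⟩ : Fin 4) ≠ (u' s).castLE (by norm_num) := by
      intro hh; have := congrArg Fin.val hh
      simp at this; omega
    simp [hne, hne'] at h1
    exact Fin.ext h1

private lemma Q_eq (F : Type*) [Field F] :
    (∏ s : Fin ν,
      ((X (s, 0) : MvPolynomial (Fin ν × Fin 4) F) * X (s, 2) + X (s, 1) * X (s, 3)))
    = ∑ w : Fin ν → Fin 2, monomial (dd w w) (1 : F) := by
  classical
  have hfac : ∀ s : Fin ν,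
      ((X (s, 0) : MvPolynomial (Fin ν × Fin 4) F) * X (s, 2) + X (s, 1) * X (s, 3))
      = ∑ j : Fin 2,
          monomial (Finsupp.single (s, ((j : Fin 2).castLE (by norm_num) : Fin 4)) 1 +
            Finsupp.single (s, (⟨(j : Fin 2).val + 2, Nat.add_lt_add_right j.isLt 2⟩ : Fin 4)) 1) (1 : F) := by
    intro s
    rw [Fin.sum_univ_two]
    rw [show ((0 : Fin 2).castLE (by norm_num : (2:ℕ) ≤ 4) : Fin 4) = 0 from rfl,
        show ((1 : Fin 2).castLE (by norm_num : (2:ℕ) ≤ 4) : Fin 4) = 1 from rfl,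
        show (⟨(0 : Fin 2).val + 2, by omega⟩ : Fin 4) = 2 from rfl,
        show (⟨(1 : Fin 2).val + 2, by omega⟩ : Fin 4) = 3 from rfl]
    rw [monomial_add_single, monomial_add_single]
    simp [X, pow_one]
  calc _ = ∑ w : Fin ν → Fin 2, ∏ s : Fin ν,
        monomial (Finsupp.single (s, ((w s).castLE (by norm_num) : Fin 4)) 1 +
          Finsupp.single (s, (⟨(w s).val + 2, Nat.add_lt_add_right (w s).isLt 2⟩ : Fin 4)) 1) (1 : F) := by
        rw [Finset.prod_congr rfl (fun s _ => hfac s), Fintype.prod_sum]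
    _ = _ := by
        refine Finset.sum_congr rfl fun w _ => ?_
        rw [dd, ← monomial_sum_one]
end

private lemma key (F : Type*) [Field F] {ν : ℕ} (u v : Fin ν → Fin 2) :
    MvPolynomial.coeff (dd u v)
      (∏ s : Fin ν,
        ((X (s, 0) : MvPolynomial (Fin ν × Fin 4) F) * X (s, 2) + X (s, 1) * X (s, 3)))
    = if u = v then (1 : F) else 0 := by
  classical
  rw [Q_eq, MvPolynomial.coeff_sum]
  simp only [MvPolynomial.coeff_monomial]
  have hcond : ∀ w : Fin ν → Fin 2, (dd w w = dd u v) ↔ (w = u ∧ w = v) := by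
    intro w
    constructor
    · intro h
      obtain ⟨h1, h2⟩ := dd_inj _ _ _ _ h
      exact ⟨h1, h2⟩
    · rintro ⟨rfl, rfl⟩; rfl
  rw [Finset.sum_congr rfl (fun w _ => if_congr (hcond w) rfl rfl)]
  by_cases huv : u = v
  · subst huv
    simp
  · rw [if_neg huv]
    exact Finset.sum_eq_zero fun w _ => if_neg (fun h => huv (h.1.symm.trans h.2))

theorem coeff_matrix_prod_quadratics_eq_one (F : Type*) [Field F] (ν : ℕ) (hν : 1 ≤ ν) :
    (∀ u v : Fin ν → Fin 2,
      (fun u v : Fin ν → Fin 2 =>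
        MvPolynomial.coeff
          (∑ s : Fin ν,
            (Finsupp.single (s, ((u s).castLE (by norm_num) : Fin 4)) 1 +
             Finsupp.single (s, (⟨(v s).val + 2, by have := (v s).isLt; omega⟩ : Fin 4)) 1))
          (∏ s : Fin ν,
            ((X (s, 0) : MvPolynomial (Fin ν × Fin 4) F) * X (s, 2) +
              X (s, 1) * X (s, 3)))) u v = if u = v then 1 else 0) ∧
    Matrix.rank
      (fun u v : Fin ν → Fin 2 =>
        MvPolynomial.coeff
          (∑ s : Fin ν,
            (Finsupp.single (s, ((u s).castLE (by norm_num) : Fin 4)) 1 +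
             Finsupp.single (s, (⟨(v s).val + 2, by have := (v s).isLt; omega⟩ : Fin 4)) 1))
          (∏ s : Fin ν,
            ((X (s, 0) : MvPolynomial (Fin ν × Fin 4) F) * X (s, 2) +
              X (s, 1) * X (s, 3)))) = 2 ^ ν := by
  classical
  have hk : ∀ u v : Fin ν → Fin 2,
      MvPolynomial.coeff
          (∑ s : Fin ν,
            (Finsupp.single (s, ((u s).castLE (by norm_num) : Fin 4)) 1 +
             Finsupp.single (s, (⟨(v s).val + 2, by have := (v s).isLt; omega⟩ : Fin 4)) 1))
          (∏ s : Fin ν,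
            ((X (s, 0) : MvPolynomial (Fin ν × Fin 4) F) * X (s, 2) +
              X (s, 1) * X (s, 3))) = if u = v then (1 : F) else 0 :=
    fun u v => key F u v
  refine ⟨fun u v => hk u v, ?_⟩
  have hmat : (fun u v : Fin ν → Fin 2 =>
      MvPolynomial.coeff
          (∑ s : Fin ν,
            (Finsupp.single (s, ((u s).castLE (by norm_num) : Fin 4)) 1 +
             Finsupp.single (s, (⟨(v s).val + 2, by have := (v s).isLt; omega⟩ : Fin 4)) 1))
          (∏ s : Fin ν,
            ((X (s, 0) : MvPolynomial (Fin ν × Fin 4) F) * X (s, 2) +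
              X (s, 1) * X (s, 3))))
      = (1 : Matrix (Fin ν → Fin 2) (Fin ν → Fin 2) F) := by
    funext u v
    rw [hk u v, Matrix.one_apply]
  rw [hmat, Matrix.rank_one]
  simp
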